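/- Suppose w_i ∈ [0,1) with i·(1-w_i) → λ > 0. Define E_N = 1 + Σ_{n=1}^{N-1} Π_{i=n}^{N-1} w_i and S_N = 1 + Σ_{n=1}^{N-1}(2N+1-2n)Π_{i=n}^{N-1} w_i. Then (S_N - E_N²)/N² → λ/((λ+1)²(λ+2)) as N → ∞. -/

import Mathlib

open Filter Finset
open scoped Topology

open Asymptotics in

lemma my_stolz {a b : ℕ → ℝ} {L : ℝ}
    (hb : ∀ n, 0 < b (n + 1) - b n)
    (hbtop : Tendsto b atTop atTop)
    (h : Tendsto (fun n => (a (n + 1) - a n) / (b (n + 1) - b n)) atTop (𝓝 L)) :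
    Tendsto (fun n => a n / b n) atTop (𝓝 L) := by
  set f : ℕ → ℝ := fun n => (a (n + 1) - a n) - L * (b (n + 1) - b n) with hf
  set g : ℕ → ℝ := fun n => b (n + 1) - b n with hg
  have hg0 : 0 ≤ g := fun n => (hb n).le
  have hfo : f =o[atTop] g := by
    rw [isLittleO_iff_tendsto' (Eventually.of_forall fun n h0 => absurd h0 (hb n).ne')]
    have : (fun n => f n / g n) = fun n => (a (n + 1) - a n) / (b (n + 1) - b n) - L := by
      funext n
      show (a (n + 1) - a n - L * (b (n + 1) - b n)) / (b (n + 1) - b n) = _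
      rw [sub_div, mul_div_assoc, div_self (hb n).ne', mul_one]
    rw [this]
    simpa using h.sub_const L
  have hSg : Tendsto (fun n => ∑ i ∈ range n, g i) atTop atTop := by
    have : (fun n => ∑ i ∈ range n, g i) = fun n => b n - b 0 := by
      funext n; exact Finset.sum_range_sub b n
    rw [this]
    exact tendsto_atTop_add_const_right _ _ hbtop
  have key := hfo.sum_range hg0 hSg
  have hsf : (fun n => ∑ i ∈ range n, f i) = fun n => (a n - a 0) - L * (b n - b 0) := by
    funext n
    have h1 : ∑ x ∈ range n, a (x + 1) - ∑ x ∈ range n, a x = a n - a 0 := by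
      rw [← Finset.sum_sub_distrib]; exact Finset.sum_range_sub a n
    have h2 : ∑ x ∈ range n, b (x + 1) - ∑ x ∈ range n, b x = b n - b 0 := by
      rw [← Finset.sum_sub_distrib]; exact Finset.sum_range_sub b n
    simp only [hf, Finset.sum_sub_distrib]
    rw [h1, ← Finset.mul_sum, Finset.sum_range_sub b]
  have hsg : (fun n => ∑ i ∈ range n, g i) = fun n => b n - b 0 := by
    funext n; exact Finset.sum_range_sub b n
  rw [hsf, hsg] at key
  -- turn into tendsto
  have hbne : ∀ᶠ n in atTop, b n - b 0 ≠ 0 ∧ b n ≠ 0 := by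
    filter_upwards [hbtop.eventually_gt_atTop (b 0), hbtop.eventually_gt_atTop 0] with n h1 h2
    exact ⟨sub_ne_zero.2 h1.ne', h2.ne'⟩
  have hT : Tendsto (fun n => ((a n - a 0) - L * (b n - b 0)) / (b n - b 0)) atTop (𝓝 0) := by
    rw [isLittleO_iff_tendsto' ] at key
    · exact key
    · filter_upwards [hbne] with n hn h0
      exact absurd h0 hn.1
  have hinv : Tendsto (fun n => (b n)⁻¹) atTop (𝓝 0) := hbtop.inv_tendsto_atTop
  have hrat : Tendsto (fun n => (b n - b 0) / b n) atTop (𝓝 1) := by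
    have : Tendsto (fun n => 1 - b 0 * (b n)⁻¹) atTop (𝓝 (1 - b 0 * 0)) :=
      tendsto_const_nhds.sub (tendsto_const_nhds.mul hinv)
    simp only [mul_zero, sub_zero] at this
    refine this.congr' ?_
    filter_upwards [hbne] with n hn
    rw [← div_eq_mul_inv, sub_div, div_self hn.2]
  have main : Tendsto (fun n =>
      (((a n - a 0) - L * (b n - b 0)) / (b n - b 0)) * ((b n - b 0) / b n)
        + L * ((b n - b 0) / b n) + a 0 * (b n)⁻¹) atTop (𝓝 (0 * 1 + L * 1 + a 0 * 0)) :=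
    (((hT.mul hrat).add ((tendsto_const_nhds (x := L)).mul hrat)).add
      ((tendsto_const_nhds (x := a 0)).mul hinv))
  simp only [zero_mul, mul_one, mul_zero, add_zero, zero_add] at main
  refine main.congr' ?_
  filter_upwards [hbne] with n hn
  have h3 : (a n - a 0 - L * (b n - b 0)) / (b n - b 0) * ((b n - b 0) / b n)
      = (a n - a 0 - L * (b n - b 0)) / b n := by
    rw [div_mul_div_comm, mul_comm (a n - a 0 - L * (b n - b 0)), mul_div_mul_left _ _ hn.1]
  rw [h3, ← div_eq_mul_inv, ← mul_div_assoc, ← add_div, ← add_div]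
  congr 1
  ring

open Asymptotics in

lemma my_ratio_lim (w p : ℕ → ℝ) (i₀ : ℕ)
    (hp : ∀ n, 0 < p n) (hple : ∀ n, p n ≤ 1)
    (hpeq : ∀ n, n ≤ i₀ → p n = 1)
    (hpr : ∀ n, i₀ ≤ n → p (n + 1) = p n * w n)
    (hw1 : ∀ i, w i ≤ 1)
    (x c : ℕ → ℝ)
    (hrec : ∀ n, i₀ ≤ n → x (n + 1) = c n + w n * x n)
    (φ : ℕ → ℝ) (hφ : ∀ n : ℕ, (n : ℝ) ≤ φ n) (hφmono : ∀ n, φ n < φ (n + 1))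
    (L : ℝ)
    (hL : Tendsto (fun n => c n / (φ (n + 1) - φ n * w n)) atTop (𝓝 L)) :
    Tendsto (fun n => x n / φ n) atTop (𝓝 L) := by
  have hφ0 : ∀ n, 0 ≤ φ n := fun n => le_trans (Nat.cast_nonneg n) (hφ n)
  have hwpos : ∀ n, i₀ ≤ n → 0 < w n := by
    intro n hn
    have h1 := hp (n + 1)
    rw [hpr n hn] at h1
    nlinarith [hp n]
  have hnum : ∀ n, 0 < φ (n + 1) - φ n * w n := by
    intro n
    have : φ n * w n ≤ φ n := mul_le_of_le_one_right (hφ0 n) (hw1 n)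
    linarith [hφmono n]
  set a : ℕ → ℝ := fun n => x n / p n with ha
  set b : ℕ → ℝ := fun n => φ n / p n with hb
  have hΔb : ∀ n, i₀ ≤ n → b (n + 1) - b n = (φ (n + 1) - φ n * w n) / p (n + 1) := by
    intro n hn
    show φ (n + 1) / p (n + 1) - φ n / p n = _
    rw [hpr n hn]
    field_simp [(hp n).ne', (hwpos n hn).ne']
  have hbpos : ∀ n, 0 < b (n + 1) - b n := by
    intro n
    rcases lt_or_ge n i₀ with h | h
    · show 0 < φ (n + 1) / p (n + 1) - φ n / p n
      rw [hpeq (n + 1) h, hpeq n h.le]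
      simpa using hφmono n
    · rw [hΔb n h]
      exact div_pos (hnum n) (hp (n + 1))
  have hbtop : Tendsto b atTop atTop := by
    apply tendsto_atTop_mono _ tendsto_natCast_atTop_atTop
    intro n
    refine le_trans (hφ n) ?_
    rw [le_div_iff₀ (hp n)]
    exact mul_le_of_le_one_right (hφ0 n) (hple n)
  have hΔa : ∀ n, i₀ ≤ n → a (n + 1) - a n = c n / p (n + 1) := by
    intro n hn
    show x (n + 1) / p (n + 1) - x n / p n = _
    rw [hrec n hn, hpr n hn]
    field_simp [(hp n).ne', (hwpos n hn).ne']
    ring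
  have hratio : Tendsto (fun n => (a (n + 1) - a n) / (b (n + 1) - b n)) atTop (𝓝 L) := by
    refine hL.congr' ?_
    filter_upwards [eventually_ge_atTop i₀] with n hn
    rw [hΔa n hn, hΔb n hn, div_div_div_cancel_right₀ (hp (n + 1)).ne']
  refine (my_stolz hbpos hbtop hratio).congr' ?_
  filter_upwards [eventually_ge_atTop 1] with n hn
  show x n / p n / (φ n / p n) = _
  rw [div_div_div_cancel_right₀ (hp n).ne']

set_option maxHeartbeats 1000000 in
/-- Variance asymptotic: with `E_N` and `S_N` the first and second moment sums,
`(S_N - E_N²)/N² → λ/((λ+1)²(λ+2))`. -/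
theorem stmt_11 (w : ℕ → ℝ) (lam : ℝ) (hlam : 0 < lam)
    (hw : ∀ i, w i ∈ Set.Ico (0 : ℝ) 1)
    (hlim : Tendsto (fun i : ℕ => (i : ℝ) * (1 - w i)) atTop (nhds lam))
    (E S : ℕ → ℝ)
    (hE : ∀ N, E N = 1 + ∑ n ∈ Finset.Icc 1 (N - 1), ∏ i ∈ Finset.Icc n (N - 1), w i)
    (hS : ∀ N, S N = 1 + ∑ n ∈ Finset.Icc 1 (N - 1),
        (2 * (N : ℝ) + 1 - 2 * (n : ℝ)) * ∏ i ∈ Finset.Icc n (N - 1), w i) :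
    Tendsto (fun N : ℕ => (S N - (E N) ^ 2) / (N : ℝ) ^ 2) atTop
      (nhds (lam / ((lam + 1) ^ 2 * (lam + 2)))) := by
  have hw0 : ∀ i, 0 ≤ w i := fun i => (hw i).1
  have hw1 : ∀ i, w i ≤ 1 := fun i => (hw i).2.le
  -- recursions
  have hErec : ∀ n, 1 ≤ n → E (n + 1) = 1 + w n * E n := by
    intro n hn
    obtain ⟨M, rfl⟩ : ∃ M, n = M + 1 := ⟨n - 1, by omega⟩
    rw [hE (M + 1 + 1), hE (M + 1)]
    simp only [Nat.add_sub_cancel]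
    have h1 : ∀ k ∈ Finset.Icc 1 (M + 1), ∏ i ∈ Finset.Icc k (M + 1), w i
        = (∏ i ∈ Finset.Icc k M, w i) * w (M + 1) := by
      intro k hk
      exact Finset.prod_Icc_succ_top (Finset.mem_Icc.mp hk).2 w
    rw [Finset.sum_congr rfl h1, ← Finset.sum_mul,
      Finset.sum_Icc_succ_top (by omega : 1 ≤ M + 1),
      Finset.Icc_eq_empty (by omega : ¬M + 1 ≤ M), Finset.prod_empty]
    ring
  have hSrec : ∀ n, 1 ≤ n → S (n + 1) = (1 + 2 * w n * E n) + w n * S n := by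
    intro n hn
    obtain ⟨M, rfl⟩ : ∃ M, n = M + 1 := ⟨n - 1, by omega⟩
    rw [hS (M + 1 + 1), hS (M + 1), hE (M + 1)]
    simp only [Nat.add_sub_cancel]
    have h1 : ∀ k ∈ Finset.Icc 1 (M + 1),
        (2 * ((M + 1 + 1 : ℕ) : ℝ) + 1 - 2 * (k : ℝ)) * ∏ i ∈ Finset.Icc k (M + 1), w i
        = ((2 * ((M + 1 : ℕ) : ℝ) + 1 - 2 * (k : ℝ)) * ∏ i ∈ Finset.Icc k M, w i
            + 2 * ∏ i ∈ Finset.Icc k M, w i) * w (M + 1) := by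
      intro k hk
      rw [Finset.prod_Icc_succ_top (Finset.mem_Icc.mp hk).2 w]
      push_cast
      ring
    rw [Finset.sum_congr rfl h1, ← Finset.sum_mul, Finset.sum_add_distrib,
      Finset.sum_Icc_succ_top (by omega : 1 ≤ M + 1), ← Finset.mul_sum,
      Finset.sum_Icc_succ_top (by omega : 1 ≤ M + 1),
      Finset.Icc_eq_empty (by omega : ¬M + 1 ≤ M), Finset.prod_empty]
    push_cast
    ring
  -- choice of i₀
  obtain ⟨M₀, hM₀⟩ := eventually_atTop.mp
    (hlim.eventually (gt_mem_nhds (by linarith : lam < lam + 1)))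
  set i₀ : ℕ := max M₀ ⌈lam + 1⌉₊ + 1 with hi₀def
  have hi₀1 : 1 ≤ i₀ := by omega
  have hi₀lam : lam + 1 ≤ (i₀ : ℝ) := by
    calc lam + 1 ≤ (⌈lam + 1⌉₊ : ℝ) := Nat.le_ceil _
    _ ≤ (i₀ : ℝ) := by exact_mod_cast by omega
  have hwpos : ∀ i, i₀ ≤ i → 0 < w i := by
    intro i hi
    by_contra hcon
    push_neg at hcon
    have h1 : (i : ℝ) * (1 - w i) < lam + 1 := hM₀ i (by omega)
    have h2 : lam + 1 ≤ (i : ℝ) := le_trans hi₀lam (by exact_mod_cast hi)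
    nlinarith
  -- the product p
  set p : ℕ → ℝ := fun n => ∏ i ∈ Finset.Ico i₀ n, w i with hpdef
  have hp : ∀ n, 0 < p n :=
    fun n => Finset.prod_pos fun i hi => hwpos i (Finset.mem_Ico.mp hi).1
  have hple : ∀ n, p n ≤ 1 :=
    fun n => Finset.prod_le_one (fun i _ => hw0 i) fun i _ => hw1 i
  have hpeq : ∀ n, n ≤ i₀ → p n = 1 := by
    intro n hn
    show ∏ i ∈ Finset.Ico i₀ n, w i = 1
    rw [Finset.Ico_eq_empty (by omega), Finset.prod_empty]
  have hpr : ∀ n, i₀ ≤ n → p (n + 1) = p n * w n :=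
    fun n hn => Finset.prod_Ico_succ_top hn w
  -- limit of E n / n
  have hEl : Tendsto (fun n : ℕ => E n / (n : ℝ)) atTop (𝓝 (1 / (1 + lam))) := by
    apply my_ratio_lim w p i₀ hp hple hpeq hpr hw1 E (fun _ => 1)
      (fun n hn => hErec n (le_trans hi₀1 hn))
      (fun n => (n : ℝ)) (fun n => le_refl _) (fun n => by show ((n:ℝ)) < ((n+1:ℕ):ℝ); exact_mod_cast Nat.lt_succ_self n)
    · have h2 : Tendsto (fun n : ℕ => (1 : ℝ) / (1 + (n : ℝ) * (1 - w n))) atTop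
          (𝓝 (1 / (1 + lam))) :=
        tendsto_const_nhds.div (hlim.const_add 1) (by linarith)
      refine h2.congr fun n => ?_
      congr 1
      push_cast
      ring
  -- w tends to 1
  have hwlim : Tendsto w atTop (𝓝 1) := by
    have h0 : Tendsto (fun n : ℕ => (n : ℝ) * (1 - w n) * (n : ℝ)⁻¹) atTop (𝓝 (lam * 0)) :=
      hlim.mul (tendsto_inv_atTop_zero.comp tendsto_natCast_atTop_atTop)
    rw [mul_zero] at h0
    have h1 : Tendsto (fun n : ℕ => 1 - w n) atTop (𝓝 0) := by
      refine h0.congr' ?_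
      filter_upwards [eventually_ge_atTop 1] with n hn
      have hn0 : (n : ℝ) ≠ 0 := by positivity
      field_simp
    have h2 : Tendsto (fun n : ℕ => 1 - (1 - w n)) atTop (𝓝 (1 - 0)) :=
      tendsto_const_nhds.sub h1
    simpa using h2
  -- limit of S n / n^2
  have hSl : Tendsto (fun n : ℕ => S n / (n : ℝ) ^ 2) atTop
      (𝓝 (2 / ((1 + lam) * (lam + 2)))) := by
    apply my_ratio_lim w p i₀ hp hple hpeq hpr hw1 S (fun n => 1 + 2 * w n * E n)
      (fun n hn => hSrec n (le_trans hi₀1 hn))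
      (fun n => (n : ℝ) ^ 2)
      (fun n => by show ((n:ℝ)) ≤ ((n:ℕ):ℝ)^2; exact_mod_cast Nat.le_self_pow two_ne_zero n)
      (fun n => by show ((n:ℕ):ℝ)^2 < ((n+1:ℕ):ℝ)^2; push_cast; nlinarith [Nat.cast_nonneg (α := ℝ) n])
    · have hnum : Tendsto (fun n : ℕ => (n : ℝ)⁻¹ + 2 * w n * (E n / (n : ℝ))) atTop
          (𝓝 (0 + 2 * 1 * (1 / (1 + lam)))) :=
        ((tendsto_inv_atTop_zero.comp tendsto_natCast_atTop_atTop)).add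
          (((hwlim.const_mul 2).mul hEl))
      have hden : Tendsto (fun n : ℕ => 2 + (n : ℝ)⁻¹ + (n : ℝ) * (1 - w n)) atTop
          (𝓝 (2 + 0 + lam)) :=
        (((tendsto_inv_atTop_zero.comp tendsto_natCast_atTop_atTop)).const_add 2).add hlim
      have hq : Tendsto (fun n : ℕ =>
          ((n : ℝ)⁻¹ + 2 * w n * (E n / (n : ℝ))) / (2 + (n : ℝ)⁻¹ + (n : ℝ) * (1 - w n)))
          atTop (𝓝 ((0 + 2 * 1 * (1 / (1 + lam))) / (2 + 0 + lam))) :=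
        hnum.div hden (by linarith)
      have hval : (0 + 2 * 1 * (1 / (1 + lam))) / (2 + 0 + lam)
          = 2 / ((1 + lam) * (lam + 2)) := by
        rw [show (0 + 2 * 1 * (1 / (1 + lam))) = 2 / (1 + lam) from by ring, div_div,
          show (1 + lam) * (2 + 0 + lam) = (1 + lam) * (lam + 2) from by ring]
      rw [hval] at hq
      refine hq.congr' ?_
      filter_upwards [eventually_ge_atTop 1] with n hn
      have hn0 : (0 : ℝ) < (n : ℝ) := by exact_mod_cast hn
      have hA : (n : ℝ)⁻¹ + 2 * w n * (E n / (n : ℝ)) = (1 + 2 * w n * E n) / (n : ℝ) := by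
        rw [add_div, one_div, mul_div_assoc]
      have hB : 2 + (n : ℝ)⁻¹ + (n : ℝ) * (1 - w n)
          = (((n + 1 : ℕ) : ℝ) ^ 2 - (n : ℝ) ^ 2 * w n) / (n : ℝ) := by
        rw [eq_div_iff hn0.ne', add_mul, add_mul, inv_mul_cancel₀ hn0.ne']
        push_cast
        ring
      rw [hA, hB, div_div_div_cancel_right₀ hn0.ne']
  -- conclusion
  have key : Tendsto (fun n : ℕ => S n / (n : ℝ) ^ 2 - (E n / (n : ℝ)) ^ 2) atTop
      (𝓝 (2 / ((1 + lam) * (lam + 2)) - (1 / (1 + lam)) ^ 2)) :=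
    hSl.sub (hEl.pow 2)
  have hval2 : 2 / ((1 + lam) * (lam + 2)) - (1 / (1 + lam)) ^ 2
      = lam / ((lam + 1) ^ 2 * (lam + 2)) := by
    have h1 : (1 : ℝ) + lam ≠ 0 := by linarith
    have h2 : lam + 2 ≠ 0 := by linarith
    have h3 : lam + 1 ≠ 0 := by linarith
    field_simp
    ring
  rw [hval2] at key
  refine key.congr' ?_
  filter_upwards [eventually_ge_atTop 1] with n hn
  rw [div_pow, div_sub_div_same]
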